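/- arXiv:math/9905205 — 3 statements merged into one kernel-verified Lean document; each statement's English description precedes it below -/
import Mathlib

section
/- Let μ be a Borel probability measure on a metric space. If for μ-almost every x the lower pointwise dimension liminf_{r→0} log μ(B(x,r))/log r is at least d, then the Hausdorff dimension of μ (the infimum of dim_H Z over sets Z of full measure) is at least d. -/
open Metric Filter Set Topology MeasureTheory
open scoped ENNReal NNReal

/-- Mass distribution principle: if `μ (closedBall x r) ≤ r ^ s` for all `x ∈ A` and all
small `r > 0`, then `μ A ≤ μH[s] A`. -/
lemma aux_mass_distribution {X : Type*} [MetricSpace X] [MeasurableSpace X] [BorelSpace X]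
    (μ : Measure X) {s : ℝ} (hs : 0 < s) {b : ℝ} (hb : 0 < b) {A : Set X}
    (hA : ∀ x ∈ A, ∀ r : ℝ, 0 < r → r ≤ b → μ (closedBall x r) ≤ ENNReal.ofReal (r ^ s)) :
    μ A ≤ μH[s] A := by
  rw [MeasureTheory.Measure.hausdorffMeasure_apply]
  refine le_iSup₂_of_le (ENNReal.ofReal (b / 2)) (ENNReal.ofReal_pos.2 (by linarith)) ?_
  refine le_iInf fun t => le_iInf fun hcov => le_iInf fun hdiam => ?_
  have step1 : μ A ≤ ∑' i, μ (t i ∩ A) := by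
    refine le_trans (measure_mono ?_) (measure_iUnion_le _)
    intro x hx
    rcases mem_iUnion.1 (hcov hx) with ⟨i, hi⟩
    exact mem_iUnion.2 ⟨i, hi, hx⟩
  refine step1.trans (ENNReal.tsum_le_tsum fun i => ?_)
  rcases (t i ∩ A).eq_empty_or_nonempty with he | ⟨x, hxt, hxA⟩
  · simp [he]
  · have hne : (t i).Nonempty := ⟨x, hxt⟩
    rw [iSup_pos hne]
    set δ : ℝ≥0∞ := EMetric.diam (t i) with hδ
    have hδtop : δ ≠ ⊤ := (lt_of_le_of_lt (hdiam i) ENNReal.ofReal_lt_top).ne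
    have hδb : δ.toReal ≤ b / 2 := ENNReal.toReal_le_of_le_ofReal (by linarith) (hdiam i)
    have hlt : δ.toReal < b := lt_of_le_of_lt hδb (by linarith)
    have hmem : Ioo δ.toReal b ∈ 𝓝[>] δ.toReal :=
      Ioo_mem_nhdsGT_of_mem ⟨le_refl _, hlt⟩
    have hev : ∀ᶠ r in 𝓝[>] δ.toReal, μ (t i) ≤ ENNReal.ofReal (r ^ s) := by
      filter_upwards [hmem] with r hr
      have hbd : Bornology.IsBounded (t i) := by
        rw [Metric.isBounded_iff_ediam_ne_top]; exact hδtop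
      have hsub : t i ⊆ closedBall x r := fun y hy =>
        le_trans (Metric.dist_le_diam_of_mem hbd hy hxt) (le_of_lt hr.1)
      refine (measure_mono hsub).trans (hA x hxA r ?_ hr.2.le)
      exact lt_of_le_of_lt ENNReal.toReal_nonneg hr.1
    have hlim : Filter.Tendsto (fun r : ℝ => ENNReal.ofReal (r ^ s)) (𝓝[>] δ.toReal)
        (𝓝 (ENNReal.ofReal (δ.toReal ^ s))) := by
      refine Filter.Tendsto.mono_left ?_ nhdsWithin_le_nhds
      exact (ENNReal.continuous_ofReal.continuousAt.comp
        (Real.continuousAt_rpow_const _ _ (Or.inr hs.le)))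
    have hfin : μ (t i) ≤ ENNReal.ofReal (δ.toReal ^ s) := ge_of_tendsto hlim hev
    refine (measure_mono inter_subset_left).trans (hfin.trans ?_)
    rcases eq_or_ne δ 0 with h0 | h0
    · simp [h0, Real.zero_rpow hs.ne', ENNReal.zero_rpow_of_pos hs]
    · have hpos : (0 : ℝ) < δ.toReal := ENNReal.toReal_pos h0 hδtop
      rw [← ENNReal.ofReal_rpow_of_pos hpos, ENNReal.ofReal_toReal hδtop]
      exact le_rfl

/-- If the lower pointwise dimension of a Borel probability measure is at least `d`
almost everywhere, then the Hausdorff dimension of the measure, i.e. the infimum of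
`dimH Z` over sets `Z` of full measure, is at least `d`. -/
theorem dimH_measure_ge_of_liminf_ge {X : Type*} [MetricSpace X] [MeasurableSpace X]
    [BorelSpace X] (μ : Measure X) [IsProbabilityMeasure μ] (d : ℝ)
    (h : ∀ᵐ x ∂μ,
      d ≤ Filter.liminf
        (fun r : ℝ => Real.log (μ (Metric.closedBall x r)).toReal / Real.log r)
        (nhdsWithin 0 (Set.Ioi 0))) :
    ∀ Z : Set X, μ Z = 1 → ENNReal.ofReal d ≤ dimH Z := by
  intro Z hZ
  rcases le_or_gt d 0 with hd | hd
  · rw [ENNReal.ofReal_of_nonpos hd]; exact zero_le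
  refine ENNReal.le_of_forall_nnreal_lt fun s hsd' => ?_
  have hsd : (s : ℝ) < d := by
    by_contra hc
    push_neg at hc
    exact absurd hsd' (not_lt.2 ((ENNReal.ofReal_le_ofReal hc).trans_eq
      ENNReal.ofReal_coe_nnreal))
  rcases eq_or_ne s 0 with rfl | hne
  · simp
  have hs0 : (0 : ℝ) < (s : ℝ) := by exact_mod_cast pos_iff_ne_zero.2 hne
  -- a.e. eventual power bound
  have hev : ∀ᵐ x ∂μ, ∀ᶠ r in 𝓝[>] (0 : ℝ),
      μ (closedBall x r) ≤ ENNReal.ofReal (r ^ (s : ℝ)) := by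
    filter_upwards [h] with x hx
    by_contra hc
    rw [Filter.not_eventually] at hc
    set f : ℝ → ℝ := fun r => Real.log (μ (closedBall x r)).toReal / Real.log r with hf
    have hev1 : ∀ᶠ r in 𝓝[>] (0 : ℝ), 0 < r ∧ r < 1 := by
      filter_upwards [self_mem_nhdsWithin,
        eventually_nhdsWithin_of_eventually_nhds (eventually_lt_nhds one_pos)] with r h1 h2
      exact ⟨h1, h2⟩
    have hfreq : ∃ᶠ r in 𝓝[>] (0 : ℝ), f r ≤ s := by
      refine (hc.and_eventually hev1).mono ?_
      rintro r ⟨hr, hr0, hr1⟩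
      have hlt : ENNReal.ofReal (r ^ (s : ℝ)) < μ (closedBall x r) := not_le.1 hr
      have hfin : μ (closedBall x r) ≠ ⊤ := (measure_lt_top μ _).ne
      have hlt' : r ^ (s : ℝ) < (μ (closedBall x r)).toReal :=
        (ENNReal.ofReal_lt_iff_lt_toReal (by positivity) hfin).1 hlt
      have hrs : (0 : ℝ) < r ^ (s : ℝ) := Real.rpow_pos_of_pos hr0 _
      have hlog : (s : ℝ) * Real.log r < Real.log (μ (closedBall x r)).toReal := by
        rw [← Real.log_rpow hr0]
        exact Real.log_lt_log hrs hlt'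
      have hlr : Real.log r < 0 := Real.log_neg hr0 hr1
      exact le_of_lt ((div_lt_iff_of_neg hlr).2 hlog)
    have hbdd : (𝓝[>] (0 : ℝ)).IsBoundedUnder (· ≥ ·) f := by
      refine isBoundedUnder_of_eventually_ge (a := 0) ?_
      filter_upwards [hev1] with r ⟨hr0, hr1⟩
      have hm : (μ (closedBall x r)).toReal ≤ 1 := by
        rw [← ENNReal.toReal_one]
        exact ENNReal.toReal_mono ENNReal.one_ne_top prob_le_one
      have h1 : Real.log (μ (closedBall x r)).toReal ≤ 0 := Real.log_nonpos
        ENNReal.toReal_nonneg hm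
      have h2 : Real.log r < 0 := Real.log_neg hr0 hr1
      exact div_nonneg_of_nonpos h1 h2.le
    have := Filter.liminf_le_of_frequently_le hfreq hbdd
    exact absurd (hx.trans this) (not_le.2 hsd)
  -- the sets A n
  set A : ℕ → Set X := fun n =>
    {x | x ∈ Z ∧ ∀ r : ℝ, 0 < r → r ≤ 1 / (n + 1) →
      μ (closedBall x r) ≤ ENNReal.ofReal (r ^ (s : ℝ))} with hA
  have hZA : Z ≤ᵐ[μ] ⋃ n, A n := by
    filter_upwards [hev] with x hx hxZ
    rw [Filter.eventually_iff, mem_nhdsGT_iff_exists_Ioo_subset] at hx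
    obtain ⟨u, hu, hsub⟩ := hx
    obtain ⟨n, hn⟩ := exists_nat_one_div_lt (mem_Ioi.1 hu)
    exact mem_iUnion.2 ⟨n, hxZ, fun r hr hr' => hsub ⟨hr, lt_of_le_of_lt hr' hn⟩⟩
  have h1 : 1 ≤ μ (⋃ n, A n) := hZ ▸ measure_mono_ae hZA
  obtain ⟨n, hn⟩ : ∃ n, μ (A n) ≠ 0 := by
    by_contra hc
    push_neg at hc
    rw [measure_iUnion_null hc] at h1
    exact absurd h1 (by norm_num)
  have key : μ (A n) ≤ μH[(s : ℝ)] (A n) :=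
    aux_mass_distribution μ hs0 (b := 1 / (n + 1)) (by positivity)
      (fun x hx r h1 h2 => hx.2 r h1 h2)
  have hH : μH[(s : ℝ)] Z ≠ 0 := by
    intro h0
    have : μH[(s : ℝ)] (A n) = 0 :=
      le_antisymm (h0 ▸ measure_mono fun x hx => hx.1) (zero_le)
    exact hn (le_antisymm (this ▸ key) (zero_le))
  exact le_dimH_of_hausdorffMeasure_ne_zero hH
end

section
/- Let μ be a finite Borel measure on ℝ^n and A a measurable set with μ(A) > 0. Then for every δ > 0 there exist a measurable set Δ ⊆ A with μ(Δ) > μ(A) − δ and a number r₀ > 0 such that for all x ∈ Δ and all 0 < r < r₀, μ(B(x,r) ∩ A) ≥ (1/2) μ(B(x,r)). -/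
open Metric Filter Set Topology MeasureTheory ENNReal

/-- Uniform Borel density lemma: given a finite Borel measure `μ` on `ℝⁿ` and a
measurable set `A` of positive measure, for every `δ > 0` there are a measurable set
`Δ ⊆ A` with `μ(Δ) > μ(A) - δ` and `r₀ > 0` such that for all `x ∈ Δ` and
`0 < r < r₀` one has `μ(B(x,r) ∩ A) ≥ (1/2) μ(B(x,r))`. -/
theorem uniform_borel_density {n : ℕ} (μ : Measure (EuclideanSpace ℝ (Fin n)))
    [IsFiniteMeasure μ] (A : Set (EuclideanSpace ℝ (Fin n))) (hA : MeasurableSet A)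
    (hpos : 0 < μ A) (δ : ℝ) (hδ : 0 < δ) :
    ∃ Δ : Set (EuclideanSpace ℝ (Fin n)), MeasurableSet Δ ∧ Δ ⊆ A ∧
      μ A - ENNReal.ofReal δ < μ Δ ∧
      ∃ r₀ : ℝ, 0 < r₀ ∧ ∀ x ∈ Δ, ∀ r : ℝ, 0 < r → r < r₀ →
        (1 / 2 : ℝ≥0∞) * μ (Metric.closedBall x r) ≤ μ (Metric.closedBall x r ∩ A) := by
  -- measurability of x ↦ μ (closedBall x c ∩ A) and x ↦ μ (closedBall x c)
  have meas1 : ∀ c : ℝ, Measurable fun x : EuclideanSpace ℝ (Fin n) =>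
      μ (closedBall x c ∩ A) := by
    intro c
    have hs : MeasurableSet {p : EuclideanSpace ℝ (Fin n) × EuclideanSpace ℝ (Fin n) |
        dist p.2 p.1 ≤ c ∧ p.2 ∈ A} :=
      ((isClosed_le (continuous_snd.dist continuous_fst)
        continuous_const).measurableSet).inter (measurable_snd hA)
    have hpre : ∀ x : EuclideanSpace ℝ (Fin n),
        Prod.mk x ⁻¹' {p : EuclideanSpace ℝ (Fin n) × EuclideanSpace ℝ (Fin n) |
          dist p.2 p.1 ≤ c ∧ p.2 ∈ A} = closedBall x c ∩ A := by
      intro x; ext y; simp [Metric.mem_closedBall]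
    simpa [hpre] using measurable_measure_prodMk_left (ν := μ) hs
  have meas0 : ∀ c : ℝ, Measurable fun x : EuclideanSpace ℝ (Fin n) =>
      μ (closedBall x c) := by
    intro c
    have hs : MeasurableSet {p : EuclideanSpace ℝ (Fin n) × EuclideanSpace ℝ (Fin n) |
        dist p.2 p.1 ≤ c} :=
      (isClosed_le (continuous_snd.dist continuous_fst) continuous_const).measurableSet
    have hpre : ∀ x : EuclideanSpace ℝ (Fin n),
        Prod.mk x ⁻¹' {p : EuclideanSpace ℝ (Fin n) × EuclideanSpace ℝ (Fin n) |
          dist p.2 p.1 ≤ c} = closedBall x c := by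
      intro x; ext y; simp [Metric.mem_closedBall]
    simpa [hpre] using measurable_measure_prodMk_left (ν := μ) hs
  -- the good sets, defined with rational radii
  set E : ℕ → Set (EuclideanSpace ℝ (Fin n)) := fun k =>
    A ∩ ⋂ (q : ℚ) (_ : 0 < (q : ℝ) ∧ (q : ℝ) < 1 / (k + 1)),
      {x | (1 / 2 : ℝ≥0∞) * μ (closedBall x q) ≤ μ (closedBall x q ∩ A)} with hE
  have hEmeas : ∀ k, MeasurableSet (E k) := by
    intro k
    simp only [hE]
    refine hA.inter (MeasurableSet.iInter fun q => MeasurableSet.iInter fun _ => ?_)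
    exact measurableSet_le (measurable_const.mul (meas0 q)) (meas1 q)
  have hEsub : ∀ k, E k ⊆ A := fun k => inter_subset_left
  have hEmono : Monotone E := by
    intro k l hkl x hx
    simp only [hE, mem_inter_iff, mem_iInter, mem_setOf_eq] at hx ⊢
    refine ⟨hx.1, ?_⟩
    intro q hq
    refine hx.2 q ⟨hq.1, hq.2.trans_le ?_⟩
    apply one_div_le_one_div_of_le
    · positivity
    · exact add_le_add_left (Nat.cast_le.mpr hkl) 1
  -- key property of E k with real radii, via continuity from above
  have hEkey : ∀ k, ∀ x ∈ E k, ∀ r : ℝ, 0 < r → r < 1 / (k + 1) →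
      (1 / 2 : ℝ≥0∞) * μ (closedBall x r) ≤ μ (closedBall x r ∩ A) := by
    intro k x hx r hr hr'
    set r₀ : ℝ := 1 / (k + 1) with hr₀def
    simp only [hE, mem_inter_iff, mem_iInter, mem_setOf_eq] at hx
    have hxq : ∀ q : ℚ, 0 < (q : ℝ) → (q : ℝ) < r₀ →
        (1 / 2 : ℝ≥0∞) * μ (closedBall x q) ≤ μ (closedBall x q ∩ A) := fun q h1 h2 =>
      hx.2 q ⟨h1, h2⟩
    obtain ⟨q0, hq01, hq02⟩ := exists_rat_btwn hr'
    set I := {q : ℚ // r < (q : ℝ) ∧ (q : ℝ) < r₀}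
    have : Nonempty I := ⟨⟨q0, hq01, hq02⟩⟩
    set s : I → Set (EuclideanSpace ℝ (Fin n)) := fun q => closedBall x (q : ℝ) ∩ A with hs
    have hInter : ⋂ q : I, s q = closedBall x r ∩ A := by
      apply Subset.antisymm
      · intro y hy
        simp only [mem_iInter, hs, mem_inter_iff, Metric.mem_closedBall] at hy
        refine ⟨?_, (hy ⟨q0, hq01, hq02⟩).2⟩
        rw [Metric.mem_closedBall]
        by_contra hcon
        push_neg at hcon
        obtain ⟨q, hq1, hq2⟩ := exists_rat_btwn (lt_min hcon hr')
        exact absurd ((hy ⟨q, hq1, (hq2.trans_le (min_le_right _ _))⟩).1)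
          (not_le.mpr ((lt_min_iff.mp hq2).1))
      · intro y hy
        simp only [mem_iInter, hs, mem_inter_iff, Metric.mem_closedBall] at *
        exact fun q => ⟨hy.1.trans q.2.1.le, hy.2⟩
    have hdir : Directed (· ⊇ ·) s := by
      intro q1 q2
      refine ⟨⟨min q1.1 q2.1, ?_, ?_⟩, ?_, ?_⟩
      · push_cast; exact lt_min q1.2.1 q2.2.1
      · push_cast; exact lt_of_le_of_lt (min_le_left _ _) q1.2.2
      · exact inter_subset_inter_left _ (closedBall_subset_closedBall (by
          push_cast; exact min_le_left _ _))
      · exact inter_subset_inter_left _ (closedBall_subset_closedBall (by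
          push_cast; exact min_le_right _ _))
    have hmeq : μ (⋂ q : I, s q) = ⨅ q : I, μ (s q) := by
      refine Directed.measure_iInter (fun q => ?_) hdir
        ⟨⟨q0, hq01, hq02⟩, measure_ne_top μ _⟩
      exact (measurableSet_closedBall.inter hA).nullMeasurableSet
    rw [← hInter, hmeq]
    refine le_iInf fun q => ?_
    show (1 / 2 : ℝ≥0∞) * μ (closedBall x r) ≤ μ (closedBall x (q.1 : ℝ) ∩ A)
    calc (1 / 2 : ℝ≥0∞) * μ (closedBall x r)
        ≤ (1 / 2 : ℝ≥0∞) * μ (closedBall x (q.1 : ℝ)) :=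
          mul_le_mul_right (measure_mono (closedBall_subset_closedBall q.2.1.le)) _
      _ ≤ μ (closedBall x (q.1 : ℝ) ∩ A) := hxq q.1 (hr.trans q.2.1) q.2.2
  -- almost every point of A is in some E k
  have hae : ∀ᵐ x ∂μ.restrict A, x ∈ ⋃ k, E k := by
    filter_upwards [ae_restrict_mem hA, Besicovitch.ae_tendsto_measure_inter_div μ A]
      with x hxA hx
    have hev := hx.eventually (eventually_gt_nhds (by norm_num : (1 / 2 : ℝ≥0∞) < 1))
    obtain ⟨ε, hε, hsub⟩ := mem_nhdsGT_iff_exists_Ioo_subset.mp hev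
    obtain ⟨k, hk⟩ := exists_nat_one_div_lt (mem_Ioi.mp hε)
    refine mem_iUnion.mpr ⟨k, ?_⟩
    simp only [hE, mem_inter_iff, mem_iInter, mem_setOf_eq]
    refine ⟨hxA, fun q hq => ?_⟩
    have hq' : (q : ℝ) ∈ Ioo (0 : ℝ) ε := ⟨hq.1, hq.2.trans hk⟩
    have h2 : (1 / 2 : ℝ≥0∞) < μ (A ∩ closedBall x q) / μ (closedBall x q) := hsub hq'
    rw [Set.inter_comm]
    exact ENNReal.mul_le_of_le_div h2.le
  -- hence μ (⋃ k, E k) = μ A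
  have hUmeas : MeasurableSet (⋃ k, E k) := MeasurableSet.iUnion hEmeas
  have hdiff0 : μ (A \ ⋃ k, E k) = 0 := by
    have h1 : μ.restrict A (⋃ k, E k)ᶜ = 0 := by
      rw [Set.compl_def]
      exact ae_iff.mp hae
    rw [Measure.restrict_apply hUmeas.compl] at h1
    rwa [diff_eq, inter_comm]
  have hUA : μ (⋃ k, E k) = μ A := by
    refine le_antisymm (measure_mono (iUnion_subset hEsub)) ?_
    calc μ A ≤ μ ((⋃ k, E k) ∪ (A \ ⋃ k, E k)) := measure_mono (fun y hy => by
          by_cases h : y ∈ ⋃ k, E k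
          · exact Or.inl h
          · exact Or.inr ⟨hy, h⟩)
      _ ≤ μ (⋃ k, E k) + μ (A \ ⋃ k, E k) := measure_union_le _ _
      _ = μ (⋃ k, E k) := by rw [hdiff0, add_zero]
  -- pick k by continuity from below
  have htend : Tendsto (μ ∘ E) atTop (𝓝 (μ A)) := by
    rw [← hUA]; exact tendsto_measure_iUnion_atTop hEmono
  have hlt : μ A - ENNReal.ofReal δ < μ A :=
    ENNReal.sub_lt_self (measure_ne_top μ A) hpos.ne'
      (by simp [ENNReal.ofReal_eq_zero, not_le.mpr hδ])
  obtain ⟨k, hk⟩ := (htend.eventually (eventually_gt_nhds hlt)).exists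
  exact ⟨E k, hEmeas k, hEsub k, hk, 1 / (k + 1), by positivity, hEkey k⟩
end

section
/- Let μ be a Borel probability measure on a metric space X such that for μ-almost every x the pointwise dimension lim_{r→0} log μ(B(x,r))/log r exists and equals d. Then the lower box dimension of μ, defined as lim_{δ→0} inf{dim̲_B Z : μ(Z) ≥ 1 − δ}, is at most d, and the Hausdorff dimension of μ equals d. -/
open Metric Filter Set Topology MeasureTheory ENNReal

variable {X : Type*} [MetricSpace X]

/-- The smallest number of balls of radius `ε` needed to cover `Z` (`⊤` if no finite
cover exists). -/
noncomputable def coveringNumber (Z : Set X) (ε : ℝ) : ℕ∞ :=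
  sInf {n : ℕ∞ | ∃ s : Finset X, (s.card : ℕ∞) = n ∧ Z ⊆ ⋃ x ∈ s, Metric.ball x ε}

noncomputable def boxFun (Z : Set X) (ε : ℝ) : ℝ≥0∞ :=
  if coveringNumber Z ε = ⊤ then ⊤
  else ENNReal.ofReal (Real.log ((coveringNumber Z ε).toNat) / Real.log (1 / ε))

/-- Lower box dimension of a set. -/
noncomputable def lowerBoxDim (Z : Set X) : ℝ≥0∞ :=
  Filter.liminf (boxFun Z) (nhdsWithin 0 (Set.Ioi 0))

variable [MeasurableSpace X]

/-- Lower box dimension of a measure: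
`lim_{δ→0} inf {lowerBoxDim Z : μ(Z) ≥ 1 - δ}`. -/
noncomputable def lowerBoxDimMeasure (μ : Measure X) : ℝ≥0∞ :=
  ⨆ (δ : ℝ) (_ : 0 < δ),
    sInf {d : ℝ≥0∞ | ∃ Z : Set X, 1 - ENNReal.ofReal δ ≤ μ Z ∧ d = lowerBoxDim Z}

/-- Hausdorff dimension of a measure: `inf {dimH Z : μ(Z) = 1}`. -/
noncomputable def dimHMeasure (μ : Measure X) : ℝ≥0∞ :=
  ⨅ (Z : Set X) (_ : μ Z = 1), dimH Z

/-! ### Auxiliary lemmas -/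

section Aux

set_option linter.unusedSectionVars false
set_option linter.unusedVariables false

lemma young_eventually_interval {p : ℝ → Prop}
    (hev : ∀ᶠ r in nhdsWithin 0 (Set.Ioi 0), p r) :
    ∃ r₀ : ℝ, 0 < r₀ ∧ r₀ ≤ 1/2 ∧ ∀ ρ : ℝ, 0 < ρ → ρ < r₀ → p ρ := by
  rw [eventually_nhdsWithin_iff, Metric.eventually_nhds_iff] at hev
  obtain ⟨ε, hε, hp⟩ := hev
  refine ⟨min ε (1/2), lt_min hε (by norm_num), min_le_right _ _, fun ρ hρ0 hρ => ?_⟩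
  have : dist ρ 0 < ε := by
    rw [Real.dist_eq, sub_zero, abs_of_pos hρ0]
    exact hρ.trans_le (min_le_left _ _)
  exact hp this hρ0

lemma young_nat_inv_lt (r₀ : ℝ) (hr₀ : 0 < r₀) : ∃ n : ℕ, ((n:ℝ)+1)⁻¹ < r₀ := by
  obtain ⟨n, hn⟩ := exists_nat_gt (1/r₀)
  refine ⟨n, ?_⟩
  have h1 : 1/r₀ < (n:ℝ) + 1 := hn.trans (by linarith)
  have h2 : 0 < (n:ℝ) + 1 := by positivity
  rw [inv_lt_iff_one_lt_mul₀ h2]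
  calc (1:ℝ) = (1/r₀) * r₀ := by field_simp
    _ < ((n:ℝ)+1) * r₀ := by gcongr
    _ = r₀ * ((n:ℝ)+1) := mul_comm _ _

variable [MeasurableSpace X] [BorelSpace X]

lemma young_meas_cball [SecondCountableTopology X] (μ : Measure X) [SFinite μ] (q : ℝ) :
    Measurable fun x => μ (Metric.closedBall x q) := by
  have hs : MeasurableSet {p : X × X | dist p.1 p.2 ≤ q} :=
    (isClosed_le (by fun_prop) continuous_const).measurableSet
  have h2 := measurable_measure_prodMk_left (ν := μ) hs
  have : (fun x => μ (Metric.closedBall x q))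
      = fun x => μ (Prod.mk x ⁻¹' {p : X × X | dist p.1 p.2 ≤ q}) := by
    funext x
    congr 1
    ext y
    simp [Metric.mem_closedBall, dist_comm]
  rw [this]; exact h2

lemma young_ae_pos_cball [SecondCountableTopology X] (μ : Measure X) :
    ∀ᵐ x ∂μ, ∀ r : ℝ, 0 < r → 0 < μ (Metric.closedBall x r) := by
  rw [MeasureTheory.ae_iff]
  have : {x | ¬∀ (r : ℝ), 0 < r → 0 < μ (Metric.closedBall x r)}
      ⊆ {x | ∃ r : ℝ, 0 < r ∧ μ (Metric.closedBall x r) = 0} := by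
    intro x hx
    simp only [mem_setOf_eq, not_forall, not_lt] at hx
    obtain ⟨r, hr, h0⟩ := hx
    exact ⟨r, hr, le_antisymm h0 zero_le⟩
  apply measure_mono_null this
  apply measure_null_of_locally_null
  rintro x ⟨r, hr, h0⟩
  refine ⟨Metric.ball x r, ?_, ?_⟩
  · exact mem_nhdsWithin_of_mem_nhds (Metric.ball_mem_nhds x hr)
  · exact measure_mono_null Metric.ball_subset_closedBall h0

lemma young_meas_eq_one (μ : Measure X) [IsProbabilityMeasure μ] {s : Set X}
    (hs : ∀ᵐ x ∂μ, x ∈ s) : μ s = 1 := by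
  have h0 : μ sᶜ = 0 := by rwa [ae_iff] at hs
  refine le_antisymm prob_le_one ?_
  calc (1:ℝ≥0∞) = μ Set.univ := measure_univ.symm
    _ = μ (s ∪ sᶜ) := by rw [Set.union_compl_self]
    _ ≤ μ s + μ sᶜ := measure_union_le _ _
    _ = μ s := by rw [h0, add_zero]

lemma young_exists_good_cover (μ : Measure X) [IsFiniteMeasure μ] (A : Set X) {r : ℝ}
    (hr : 0 < r) {c : ℝ≥0∞} (hc0 : 0 < c)
    (hc : ∀ x ∈ A, c ≤ μ (Metric.closedBall x (r / 3))) :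
    ∃ S : Finset X, ↑S ⊆ A ∧ A ⊆ ⋃ x ∈ S, Metric.ball x r ∧
      (S.card : ℝ≥0∞) * c ≤ μ Set.univ := by
  classical
  have key : ∀ S : Finset X, ↑S ⊆ A → (S : Set X).Pairwise (fun x y => r ≤ dist x y) →
      (S.card : ℝ≥0∞) * c ≤ μ Set.univ := by
    intro S hSA hsep
    have hdisj : (S : Set X).PairwiseDisjoint (fun x => Metric.closedBall x (r / 3)) := by
      intro x hx y hy hxy
      exact Metric.closedBall_disjoint_closedBall (by linarith [hsep hx hy hxy])
    have hsum : ∑ x ∈ S, μ (Metric.closedBall x (r / 3))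
        = μ (⋃ x ∈ S, Metric.closedBall x (r / 3)) :=
      (measure_biUnion_finset hdisj fun x _ => measurableSet_closedBall).symm
    calc (S.card : ℝ≥0∞) * c = ∑ _x ∈ S, c := by
          simp [Finset.sum_const, mul_comm]
      _ ≤ ∑ x ∈ S, μ (Metric.closedBall x (r / 3)) :=
          Finset.sum_le_sum fun x hx => hc x (hSA hx)
      _ = μ (⋃ x ∈ S, Metric.closedBall x (r / 3)) := hsum
      _ ≤ μ Set.univ := measure_mono (subset_univ _)
  set P : Set ℕ := {k | ∃ S : Finset X, ↑S ⊆ A ∧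
      (S : Set X).Pairwise (fun x y => r ≤ dist x y) ∧ S.card = k} with hP
  have hP0 : (0 : ℕ) ∈ P := ⟨∅, by simp, by simp, rfl⟩
  have hPbdd : BddAbove P := by
    refine ⟨Nat.ceil (μ Set.univ / c).toReal, ?_⟩
    rintro k ⟨S, hSA, hsep, rfl⟩
    have h1 : (S.card : ℝ≥0∞) ≤ μ Set.univ / c :=
      (ENNReal.le_div_iff_mul_le (Or.inl hc0.ne') (Or.inr (measure_ne_top μ _))).2
        (key S hSA hsep)
    have h2 : (μ Set.univ / c) ≠ ⊤ :=
      (ENNReal.div_lt_top (measure_ne_top μ _) hc0.ne').ne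
    have h3 : (S.card : ℝ) ≤ (μ Set.univ / c).toReal := by
      have := ENNReal.toReal_mono h2 h1
      simpa using this
    exact_mod_cast h3.trans (Nat.le_ceil _)
  obtain ⟨S, hSA, hsep, hScard⟩ := Nat.sSup_mem ⟨0, hP0⟩ hPbdd
  refine ⟨S, hSA, ?_, key S hSA hsep⟩
  by_contra hcov
  rw [Set.not_subset] at hcov
  obtain ⟨z, hzA, hz⟩ := hcov
  simp only [Set.mem_iUnion, not_exists, Metric.mem_ball, not_lt] at hz
  have hz' : ∀ x ∈ S, r ≤ dist z x := fun x hx => hz x hx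
  have hzS : z ∉ S := fun hzS => by
    have := hz' z hzS; simp at this; linarith
  have hmem : S.card + 1 ∈ P := by
    refine ⟨insert z S, ?_, ?_, by rw [Finset.card_insert_of_notMem hzS]⟩
    · intro y hy
      rcases Finset.mem_insert.1 (by simpa using hy) with rfl | hy'
      · exact hzA
      · exact hSA hy'
    · rw [Finset.coe_insert]
      refine Set.pairwise_insert.2 ⟨hsep, fun x hx hxz => ?_⟩
      exact ⟨hz' x hx, by rw [dist_comm]; exact hz' x hx⟩
  have := le_csSup hPbdd hmem
  rw [hScard] at this
  omega

lemma young_card_ennreal_le {S : Finset X} {r s : ℝ} (hr0 : 0 < r) (hs : 0 < s)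
    (h : (S.card : ℝ≥0∞) * ENNReal.ofReal ((r / 3) ^ s) ≤ 1) :
    (S.card : ℝ≥0∞) ≤ ENNReal.ofReal ((3 / r) ^ s) := by
  have hpos : (0:ℝ) < (r / 3) ^ s := Real.rpow_pos_of_pos (by linarith) s
  have h1 : (S.card : ℝ≥0∞) ≤ 1 / ENNReal.ofReal ((r / 3) ^ s) :=
    (ENNReal.le_div_iff_mul_le (Or.inl (by simpa using hpos)) (Or.inl ENNReal.ofReal_ne_top)).2 h
  have h2 : 1 / ENNReal.ofReal ((r / 3) ^ s) = ENNReal.ofReal ((3 / r) ^ s) := by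
    rw [one_div, ← ENNReal.ofReal_inv_of_pos hpos, ← Real.inv_rpow (by positivity), inv_div]
  rwa [h2] at h1

lemma young_card_real_le {S : Finset X} {r s : ℝ} (hr0 : 0 < r) (hs : 0 < s)
    (h : (S.card : ℝ≥0∞) * ENNReal.ofReal ((r / 3) ^ s) ≤ 1) :
    (S.card : ℝ) ≤ (3 / r) ^ s := by
  have h1 := young_card_ennreal_le hr0 hs h
  have h3 := ENNReal.toReal_mono ENNReal.ofReal_ne_top h1
  rwa [ENNReal.toReal_natCast,
    ENNReal.toReal_ofReal (le_of_lt (Real.rpow_pos_of_pos (by positivity) s))] at h3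

lemma young_boxFun_le {A : Set X} {r s : ℝ} (hr0 : 0 < r) (hr1 : r < 1) (hs : 0 < s)
    (S : Finset X) (hcov : A ⊆ ⋃ x ∈ S, Metric.ball x r)
    (hcard : (S.card : ℝ) ≤ (3 / r) ^ s) :
    boxFun A r ≤ ENNReal.ofReal (s * Real.log (3 / r) / Real.log (1 / r)) := by
  have hmem : (S.card : ℕ∞) ∈ {n : ℕ∞ | ∃ s : Finset X, (s.card : ℕ∞) = n ∧
      A ⊆ ⋃ x ∈ s, Metric.ball x r} := ⟨S, rfl, hcov⟩
  have hN : coveringNumber A r ≤ (S.card : ℕ∞) := sInf_le hmem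
  have hNne : coveringNumber A r ≠ ⊤ := ne_top_of_le_ne_top (WithTop.coe_ne_top) hN
  have hNnat : ((coveringNumber A r).toNat : ℝ) ≤ (S.card : ℝ) := by
    have h1 : ((coveringNumber A r).toNat : ℕ∞) = coveringNumber A r := ENat.coe_toNat hNne
    have h2 : ((coveringNumber A r).toNat : ℕ∞) ≤ (S.card : ℕ∞) := h1 ▸ hN
    exact_mod_cast Nat.cast_le.2 (Nat.cast_le.1 h2)
  have h3r : (1:ℝ) < 3 / r := by
    rw [lt_div_iff₀ hr0]; linarith
  have hlog3r : 0 < Real.log (3 / r) := Real.log_pos h3r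
  have hL : 0 < Real.log (1 / r) := Real.log_pos (by rw [lt_div_iff₀ hr0]; linarith)
  have hlogN : Real.log ((coveringNumber A r).toNat) ≤ s * Real.log (3 / r) := by
    rcases Nat.eq_zero_or_pos (coveringNumber A r).toNat with h0 | hpos
    · rw [h0]; simpa using le_of_lt (by positivity)
    · calc Real.log ((coveringNumber A r).toNat)
          ≤ Real.log ((3 / r) ^ s) :=
            Real.log_le_log (by exact_mod_cast hpos) (hNnat.trans hcard)
        _ = s * Real.log (3 / r) := Real.log_rpow (by linarith) s
  rw [boxFun, if_neg hNne]
  exact ENNReal.ofReal_le_ofReal (by gcongr)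

lemma young_lowerBoxDim_le_of (μ : Measure X) [IsProbabilityMeasure μ] {A : Set X} {s : ℝ}
    (hs : 0 < s) (n : ℕ)
    (hA : ∀ x ∈ A, ∀ ρ : ℝ, 0 < ρ → ρ ≤ ((n : ℝ) + 1)⁻¹ →
      ENNReal.ofReal (ρ ^ s) ≤ μ (Metric.closedBall x ρ)) :
    lowerBoxDim A ≤ ENNReal.ofReal s := by
  refine ENNReal.le_of_forall_pos_le_add fun η hη _ => ?_
  have hη' : (0:ℝ) < (η:ℝ) := hη
  set K := s * Real.log 3 / (η:ℝ) with hK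
  have hK0 : 0 < K := by
    apply div_pos (mul_pos hs (Real.log_pos (by norm_num))) hη'
  set r₂ := min ((n : ℝ) + 1)⁻¹ (Real.exp (-K)) with hr₂def
  have hr₂ : 0 < r₂ := lt_min (by positivity) (Real.exp_pos _)
  have hev : ∀ᶠ r in nhdsWithin (0:ℝ) (Set.Ioi 0), boxFun A r ≤ ENNReal.ofReal s + η := by
    filter_upwards [Ioo_mem_nhdsGT_of_mem (Set.mem_Ico.2 ⟨le_refl (0:ℝ), hr₂⟩)] with r hr
    obtain ⟨hr0, hrlt⟩ := hr
    have hrn : r ≤ ((n : ℝ) + 1)⁻¹ := hrlt.le.trans (min_le_left _ _)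
    have hrK : r < Real.exp (-K) := hrlt.trans_le (min_le_right _ _)
    have hr1 : r < 1 := hrK.trans (Real.exp_lt_one_iff.2 (by linarith))
    obtain ⟨S, hSA, hScov, hScard⟩ := young_exists_good_cover μ A hr0
      (c := ENNReal.ofReal ((r / 3) ^ s))
      (by simpa using Real.rpow_pos_of_pos (by linarith) s)
      (fun x hx => hA x hx (r / 3) (by linarith) (by linarith))
    rw [measure_univ] at hScard
    have hcardR : (S.card : ℝ) ≤ (3 / r) ^ s := young_card_real_le hr0 hs hScard
    refine (young_boxFun_le hr0 hr1 hs S hScov hcardR).trans ?_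
    have hsum : ENNReal.ofReal s + (η : ℝ≥0∞) = ENNReal.ofReal (s + (η:ℝ)) := by
      rw [ENNReal.ofReal_add hs.le hη'.le, ENNReal.ofReal_coe_nnreal]
    rw [hsum]
    apply ENNReal.ofReal_le_ofReal
    have hlogr : Real.log r < -K := by
      have := Real.log_lt_log hr0 hrK
      simpa [Real.log_exp] using this
    set L := -Real.log r with hL
    have hL0 : 0 < L := by simp only [hL]; linarith
    have e1 : Real.log (3 / r) = Real.log 3 + L := by
      rw [Real.log_div (by norm_num) (by linarith), hL]; ring
    have e2 : Real.log (1 / r) = L := by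
      rw [one_div, Real.log_inv]
    rw [e1, e2, div_le_iff₀ hL0]
    have hKL : K < L := by rw [hL]; linarith
    have hKη : K * (η:ℝ) = s * Real.log 3 := by
      rw [hK, div_mul_cancel₀ _ hη'.ne']
    nlinarith [mul_pos hη' (sub_pos.2 hKL)]
  exact Filter.liminf_le_of_frequently_le' hev.frequently

set_option maxHeartbeats 1000000 in
lemma young_dimH_le_of (μ : Measure X) [IsProbabilityMeasure μ] {A : Set X} {s : ℝ}
    (hs : 0 < s) (n : ℕ)
    (hA : ∀ x ∈ A, ∀ ρ : ℝ, 0 < ρ → ρ ≤ ((n : ℝ) + 1)⁻¹ →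
      ENNReal.ofReal (ρ ^ s) ≤ μ (Metric.closedBall x ρ)) :
    dimH A ≤ ENNReal.ofReal s := by
  refine dimH_le fun d' hd' => ?_
  by_contra hlt
  push_neg at hlt
  have hsd : s < (d' : ℝ) := by
    have := ENNReal.ofReal_lt_iff_lt_toReal hs.le ENNReal.coe_ne_top |>.1 hlt
    simpa using this
  set ρ : ℕ → ℝ := fun k => ((n : ℝ) + 1)⁻¹ / (k + 1) with hρ
  have hρpos : ∀ k, 0 < ρ k := fun k => by positivity
  have hρle : ∀ k, ρ k ≤ ((n : ℝ) + 1)⁻¹ := fun k => by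
    have h1 : (0:ℝ) < ((n:ℝ)+1)⁻¹ := by positivity
    have h2 : (1:ℝ) ≤ (k:ℝ) + 1 := by linarith [show (0:ℝ) ≤ (k:ℝ) from Nat.cast_nonneg k]
    calc ((n : ℝ) + 1)⁻¹ / ((k:ℝ) + 1) ≤ ((n : ℝ) + 1)⁻¹ / 1 := by gcongr
      _ = ((n : ℝ) + 1)⁻¹ := div_one _
  have hcover : ∀ k : ℕ, ∃ S : Finset X, ↑S ⊆ A ∧ A ⊆ ⋃ x ∈ S, Metric.ball x (ρ k) ∧
      (S.card : ℝ≥0∞) * ENNReal.ofReal ((ρ k / 3) ^ s) ≤ μ Set.univ := fun k =>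
    young_exists_good_cover μ A (hρpos k)
      (by simpa using Real.rpow_pos_of_pos (by linarith [hρpos k]) s)
      (fun x hx => hA x hx (ρ k / 3) (by linarith [hρpos k]) (by linarith [hρpos k, hρle k]))
  choose S hSA hScov hScard using hcover
  have hρ0 : Tendsto ρ atTop (𝓝 0) := by
    rw [hρ]
    simpa [div_eq_mul_inv] using (tendsto_one_div_add_atTop_nhds_zero_nat).const_mul (((n : ℝ) + 1)⁻¹)
  have hr0 : Tendsto (fun k => ENNReal.ofReal (2 * ρ k)) atTop (𝓝 0) := by
    have : Tendsto (fun k => 2 * ρ k) atTop (𝓝 0) := by simpa using hρ0.const_mul 2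
    have h := (ENNReal.continuous_ofReal.tendsto 0).comp this
    rw [ENNReal.ofReal_zero] at h; exact h
  have key := MeasureTheory.Measure.hausdorffMeasure_le_liminf_sum (d' : ℝ) A
    (fun k => ENNReal.ofReal (2 * ρ k)) hr0
    (fun k (i : ↥(S k)) => Metric.ball (i : X) (ρ k))
    (by
      filter_upwards with k
      intro i
      refine Metric.ediam_le_of_forall_dist_le fun x hx y hy => ?_
      have h1 : dist x (i : X) < ρ k := Metric.mem_ball.1 hx
      have h2 : dist y (i : X) < ρ k := Metric.mem_ball.1 hy
      calc dist x y ≤ dist x (i : X) + dist y (i : X) := dist_triangle_right x y _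
        _ ≤ 2 * ρ k := by linarith)
    (by
      filter_upwards with k
      intro a ha
      obtain ⟨x, hxS, hax⟩ := Set.mem_iUnion₂.1 (hScov k ha)
      exact Set.mem_iUnion.2 ⟨⟨x, hxS⟩, hax⟩)
  have hbound : ∀ k, ∑ i : ↥(S k), EMetric.diam (Metric.ball (i : X) (ρ k)) ^ (d' : ℝ)
      ≤ ENNReal.ofReal (3 ^ s * 2 ^ (d' : ℝ) * ρ k ^ ((d' : ℝ) - s)) := by
    intro k
    have hterm : ∀ i : ↥(S k),
        EMetric.diam (Metric.ball (i : X) (ρ k)) ^ (d' : ℝ)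
          ≤ (ENNReal.ofReal (2 * ρ k)) ^ (d' : ℝ) := by
      intro i
      refine ENNReal.rpow_le_rpow ?_ (by positivity)
      refine Metric.ediam_le_of_forall_dist_le fun x hx y hy => ?_
      have h1 : dist x (i : X) < ρ k := Metric.mem_ball.1 hx
      have h2 : dist y (i : X) < ρ k := Metric.mem_ball.1 hy
      calc dist x y ≤ dist x (i : X) + dist y (i : X) := dist_triangle_right x y _
        _ ≤ 2 * ρ k := by linarith
    have hsum : ∑ i : ↥(S k), EMetric.diam (Metric.ball (i : X) (ρ k)) ^ (d' : ℝ)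
        ≤ ((S k).card : ℝ≥0∞) * (ENNReal.ofReal (2 * ρ k)) ^ (d' : ℝ) := by
      calc ∑ i : ↥(S k), EMetric.diam (Metric.ball (i : X) (ρ k)) ^ (d' : ℝ)
          ≤ ∑ _i : ↥(S k), (ENNReal.ofReal (2 * ρ k)) ^ (d' : ℝ) :=
            Finset.sum_le_sum fun i _ => hterm i
        _ = ((S k).card : ℝ≥0∞) * (ENNReal.ofReal (2 * ρ k)) ^ (d' : ℝ) := by
            simp [Finset.sum_const, mul_comm, Finset.card_univ]
    refine hsum.trans ?_
    have hcard := young_card_ennreal_le (hρpos k) hs (by simpa [measure_univ] using hScard k)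
    have h2ρ : (ENNReal.ofReal (2 * ρ k)) ^ (d' : ℝ) = ENNReal.ofReal ((2 * ρ k) ^ (d' : ℝ)) :=
      ENNReal.ofReal_rpow_of_pos (by linarith [hρpos k])
    rw [h2ρ]
    calc ((S k).card : ℝ≥0∞) * ENNReal.ofReal ((2 * ρ k) ^ (d' : ℝ))
        ≤ ENNReal.ofReal ((3 / ρ k) ^ s) * ENNReal.ofReal ((2 * ρ k) ^ (d' : ℝ)) :=
          mul_le_mul_left hcard _
      _ = ENNReal.ofReal ((3 / ρ k) ^ s * (2 * ρ k) ^ (d' : ℝ)) :=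
          (ENNReal.ofReal_mul (by positivity)).symm
      _ ≤ ENNReal.ofReal (3 ^ s * 2 ^ (d' : ℝ) * ρ k ^ ((d' : ℝ) - s)) := by
          apply ENNReal.ofReal_le_ofReal
          have e : (3 / ρ k) ^ s * (2 * ρ k) ^ (d' : ℝ)
              = 3 ^ s * 2 ^ (d' : ℝ) * ρ k ^ ((d' : ℝ) - s) := by
            rw [Real.div_rpow (by norm_num) (hρpos k).le,
              Real.mul_rpow (by norm_num) (hρpos k).le,
              Real.rpow_sub (hρpos k)]
            field_simp
          rw [e]
  have hgtend : Tendsto (fun k => ENNReal.ofReal (3 ^ s * 2 ^ (d' : ℝ) * ρ k ^ ((d' : ℝ) - s)))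
      atTop (𝓝 0) := by
    have hrtend : Tendsto (fun k => ρ k ^ ((d' : ℝ) - s)) atTop (𝓝 0) := by
      have hc : ContinuousAt (fun x : ℝ => x ^ ((d' : ℝ) - s)) 0 :=
        Real.continuousAt_rpow_const 0 _ (Or.inr (by linarith))
      have := hc.tendsto.comp hρ0
      rw [Real.zero_rpow (show (d' : ℝ) - s ≠ 0 by linarith)] at this; exact this
    have : Tendsto (fun k => 3 ^ s * 2 ^ (d' : ℝ) * ρ k ^ ((d' : ℝ) - s)) atTop (𝓝 0) := by
      simpa using hrtend.const_mul (3 ^ s * 2 ^ (d' : ℝ))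
    have h := (ENNReal.continuous_ofReal.tendsto 0).comp this
    rw [ENNReal.ofReal_zero] at h; exact h
  have hzero : μH[(d' : ℝ)] A = 0 := by
    refine le_antisymm ?_ zero_le
    refine key.trans ?_
    rw [← hgtend.liminf_eq]
    exact Filter.liminf_le_liminf (Filter.Eventually.of_forall hbound)
  rw [hd'] at hzero
  exact top_ne_zero hzero

lemma young_le_dimH_of (μ : Measure X) [IsProbabilityMeasure μ] {B : Set X}
    (hB : MeasurableSet B) {t : ℝ} (ht : 0 < t) (m : ℕ)
    (hBub : ∀ x ∈ B, ∀ q : ℚ, 0 < (q:ℝ) → (q:ℝ) ≤ ((m:ℝ)+1)⁻¹ →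
      μ (Metric.closedBall x (q:ℝ)) ≤ ENNReal.ofReal ((q:ℝ) ^ t))
    (Z : Set X) (hZB : 0 < μ (Z ∩ B)) : ENNReal.ofReal t ≤ dimH Z := by
  have hm1 : (0:ℝ) < ((m:ℝ)+1)⁻¹ := by positivity
  have hreal : ∀ x ∈ B, ∀ D : ℝ, 0 ≤ D → D < ((m:ℝ)+1)⁻¹ →
      μ (Metric.closedBall x D) ≤ ENNReal.ofReal (D ^ t) := by
    intro x hx D hD0 hDm
    set δ := ((m:ℝ)+1)⁻¹ - D with hδ
    have hδ0 : 0 < δ := by simp [hδ]; linarith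
    have hex : ∀ k : ℕ, ∃ q : ℚ, D < (q:ℝ) ∧ (q:ℝ) < D + δ / (k+1) := fun k =>
      exists_rat_btwn (by
        have : (0:ℝ) < δ / ((k:ℝ)+1) := by positivity
        linarith)
    choose q hq1 hq2 using hex
    have hqle : ∀ k, (q k : ℝ) ≤ ((m:ℝ)+1)⁻¹ := fun k => by
      have h1 : δ / ((k:ℝ)+1) ≤ δ := by
        rw [div_le_iff₀ (by positivity)]
        nlinarith [Nat.cast_nonneg (α := ℝ) k]
      have := hq2 k
      simp only [hδ] at h1 ⊢
      linarith
    have hbd : ∀ k, μ (Metric.closedBall x D) ≤ ENNReal.ofReal ((q k : ℝ) ^ t) := fun k =>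
      (measure_mono (Metric.closedBall_subset_closedBall (hq1 k).le)).trans
        (hBub x hx (q k) (hD0.trans_lt (hq1 k)) (hqle k))
    have hqtend : Tendsto (fun k => (q k : ℝ)) atTop (𝓝 D) := by
      have h1 : Tendsto (fun k : ℕ => D + δ / ((k:ℝ)+1)) atTop (𝓝 D) := by
        have := (tendsto_one_div_add_atTop_nhds_zero_nat).const_mul δ
        simp only [mul_one_div] at this
        simpa using tendsto_const_nhds.add this
      exact tendsto_of_tendsto_of_tendsto_of_le_of_le tendsto_const_nhds h1
        (fun k => (hq1 k).le) (fun k => (hq2 k).le)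
    have htend : Tendsto (fun k => ENNReal.ofReal ((q k : ℝ) ^ t)) atTop
        (𝓝 (ENNReal.ofReal (D ^ t))) := by
      have hc : ContinuousAt (fun y : ℝ => y ^ t) D :=
        Real.continuousAt_rpow_const D t (Or.inr ht.le)
      exact (ENNReal.continuous_ofReal.tendsto _).comp (hc.tendsto.comp hqtend)
    exact ge_of_tendsto htend (Filter.Eventually.of_forall hbd)
  have hfrost : μ.restrict B ≤ μH[t] := by
    refine MeasureTheory.Measure.le_hausdorffMeasure t _ (ENNReal.ofReal (((m:ℝ)+1)⁻¹ / 2))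
      (by simp; positivity) fun u hu => ?_
    rcases (u ∩ B).eq_empty_or_nonempty with he | ⟨x, hxu, hxB⟩
    · rw [Measure.restrict_apply' hB, he, measure_empty]
      exact zero_le
    · have hune : Metric.ediam u ≠ ⊤ := (hu.trans_lt ENNReal.ofReal_lt_top).ne
      set D := (Metric.ediam u).toReal with hD
      have hD0 : 0 ≤ D := ENNReal.toReal_nonneg
      have hDlt : D < ((m:ℝ)+1)⁻¹ := by
        have := ENNReal.toReal_mono ENNReal.ofReal_ne_top hu
        rw [ENNReal.toReal_ofReal (by positivity)] at this
        linarith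
      have hsub : u ⊆ Metric.closedBall x D := fun y hy =>
        Metric.dist_le_diam_of_mem' hune hy hxu
      have h1 : μ.restrict B u ≤ μ (Metric.closedBall x D) := by
        rw [Measure.restrict_apply' hB]
        exact measure_mono ((Set.inter_subset_left).trans hsub)
      refine (h1.trans (hreal x hxB D hD0 hDlt)).trans ?_
      rcases eq_or_lt_of_le hD0 with h0 | h0
      · have hd0 : Metric.ediam u = 0 := by
          rw [← ENNReal.ofReal_toReal hune, ← hD, ← h0]; simp
        rw [hd0, ← h0, Real.zero_rpow ht.ne', ENNReal.zero_rpow_of_pos ht]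
        simp
      · rw [← ENNReal.ofReal_rpow_of_pos h0, hD, ENNReal.ofReal_toReal hune]
  have hZ : μ (Z ∩ B) ≤ μH[t] Z := by
    calc μ (Z ∩ B) = μ.restrict B Z := (Measure.restrict_apply' hB).symm
      _ ≤ μH[t] Z := Measure.le_iff'.1 hfrost Z
  have hne : μH[(t.toNNReal : ℝ)] Z ≠ 0 := by
    rw [Real.coe_toNNReal t ht.le]
    exact fun h0 => absurd (hZ.trans_eq h0) (by simpa using hZB.ne')
  have := le_dimH_of_hausdorffMeasure_ne_zero hne
  rwa [show ((t.toNNReal : ℝ≥0∞)) = ENNReal.ofReal t from rfl] at this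


lemma young_ae_lower [SecondCountableTopology X] (μ : Measure X) [IsProbabilityMeasure μ]
    (d ε : ℝ) (hε : 0 < ε)
    (h : ∀ᵐ x ∂μ, Filter.Tendsto
      (fun r : ℝ => Real.log (μ (Metric.closedBall x r)).toReal / Real.log r)
      (nhdsWithin 0 (Set.Ioi 0)) (nhds d)) :
    ∀ᵐ x ∂μ, ∃ n : ℕ, ∀ ρ : ℝ, 0 < ρ → ρ ≤ ((n:ℝ)+1)⁻¹ →
      ENNReal.ofReal (ρ ^ (d+ε)) ≤ μ (Metric.closedBall x ρ) := by
  filter_upwards [h, young_ae_pos_cball μ] with x hx hxpos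
  have hev : ∀ᶠ r in nhdsWithin 0 (Set.Ioi 0),
      Real.log (μ (Metric.closedBall x r)).toReal / Real.log r < d + ε :=
    hx.eventually_lt_const (by linarith)
  obtain ⟨r₀, hr₀, hr₀half, hp⟩ := young_eventually_interval hev
  obtain ⟨n, hn⟩ := young_nat_inv_lt r₀ hr₀
  refine ⟨n, fun ρ hρ0 hρn => ?_⟩
  have hρr₀ : ρ < r₀ := hρn.trans_lt hn
  have hρ1 : ρ < 1 := by
    have := hρr₀.trans_le hr₀half; linarith
  have hlogρ : Real.log ρ < 0 := Real.log_neg hρ0 hρ1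
  have hμpos : 0 < μ (Metric.closedBall x ρ) := hxpos ρ hρ0
  have htR : 0 < (μ (Metric.closedBall x ρ)).toReal :=
    ENNReal.toReal_pos hμpos.ne' (measure_ne_top μ _)
  have hratio := hp ρ hρ0 hρr₀
  have hlog : (d + ε) * Real.log ρ < Real.log (μ (Metric.closedBall x ρ)).toReal :=
    (div_lt_iff_of_neg hlogρ).1 hratio
  have hexp : ρ ^ (d + ε) ≤ (μ (Metric.closedBall x ρ)).toReal := by
    rw [Real.rpow_def_of_pos hρ0]
    calc Real.exp (Real.log ρ * (d + ε)) = Real.exp ((d + ε) * Real.log ρ) := by ring_nf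
      _ ≤ Real.exp (Real.log (μ (Metric.closedBall x ρ)).toReal) := Real.exp_le_exp.2 hlog.le
      _ = (μ (Metric.closedBall x ρ)).toReal := Real.exp_log htR
  calc ENNReal.ofReal (ρ ^ (d + ε)) ≤ ENNReal.ofReal (μ (Metric.closedBall x ρ)).toReal :=
        ENNReal.ofReal_le_ofReal hexp
    _ = μ (Metric.closedBall x ρ) := ENNReal.ofReal_toReal (measure_ne_top μ _)

lemma young_ae_upper [SecondCountableTopology X] (μ : Measure X) [IsProbabilityMeasure μ]
    (d t : ℝ) (htd : t < d)
    (h : ∀ᵐ x ∂μ, Filter.Tendsto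
      (fun r : ℝ => Real.log (μ (Metric.closedBall x r)).toReal / Real.log r)
      (nhdsWithin 0 (Set.Ioi 0)) (nhds d)) :
    ∀ᵐ x ∂μ, ∃ m : ℕ, ∀ q : ℚ, 0 < (q:ℝ) → (q:ℝ) ≤ ((m:ℝ)+1)⁻¹ →
      μ (Metric.closedBall x (q:ℝ)) ≤ ENNReal.ofReal ((q:ℝ) ^ t) := by
  filter_upwards [h] with x hx
  have hev : ∀ᶠ r in nhdsWithin 0 (Set.Ioi 0),
      t < Real.log (μ (Metric.closedBall x r)).toReal / Real.log r :=
    hx.eventually_const_lt htd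
  obtain ⟨r₀, hr₀, hr₀half, hp⟩ := young_eventually_interval hev
  obtain ⟨m, hm⟩ := young_nat_inv_lt r₀ hr₀
  refine ⟨m, fun q hq0 hqm => ?_⟩
  set ρ : ℝ := (q:ℝ)
  have hρr₀ : ρ < r₀ := hqm.trans_lt hm
  have hρ1 : ρ < 1 := by
    have := hρr₀.trans_le hr₀half; linarith
  have hlogρ : Real.log ρ < 0 := Real.log_neg hq0 hρ1
  rcases eq_or_lt_of_le (show (0:ℝ≥0∞) ≤ μ (Metric.closedBall x ρ) from zero_le) with h0 | hμpos
  · rw [← h0]; exact zero_le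
  · have htR : 0 < (μ (Metric.closedBall x ρ)).toReal :=
      ENNReal.toReal_pos hμpos.ne' (measure_ne_top μ _)
    have hratio := hp ρ hq0 hρr₀
    have hlog : Real.log (μ (Metric.closedBall x ρ)).toReal < t * Real.log ρ :=
      (lt_div_iff_of_neg hlogρ).1 hratio
    have hexp : (μ (Metric.closedBall x ρ)).toReal ≤ ρ ^ t := by
      rw [Real.rpow_def_of_pos hq0]
      calc (μ (Metric.closedBall x ρ)).toReal
          = Real.exp (Real.log (μ (Metric.closedBall x ρ)).toReal) := (Real.exp_log htR).symm
        _ ≤ Real.exp (t * Real.log ρ) := Real.exp_le_exp.2 hlog.le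
        _ = Real.exp (Real.log ρ * t) := by ring_nf
    calc μ (Metric.closedBall x ρ) = ENNReal.ofReal (μ (Metric.closedBall x ρ)).toReal :=
          (ENNReal.ofReal_toReal (measure_ne_top μ _)).symm
      _ ≤ ENNReal.ofReal (ρ ^ t) := ENNReal.ofReal_le_ofReal hexp

end Aux

/-- Part of Young's criterion: if the pointwise dimension of `μ` exists and equals `d`
almost everywhere, then the lower box dimension of `μ` is at most `d` and the
Hausdorff dimension of `μ` equals `d`. -/
theorem youngs_criterion_part [CompactSpace X] [BorelSpace X]
    (μ : Measure X) [IsProbabilityMeasure μ] (d : ℝ) (hd : 0 ≤ d)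
    (h : ∀ᵐ x ∂μ, Filter.Tendsto
      (fun r : ℝ => Real.log (μ (Metric.closedBall x r)).toReal / Real.log r)
      (nhdsWithin 0 (Set.Ioi 0)) (nhds d)) :
    lowerBoxDimMeasure μ ≤ ENNReal.ofReal d ∧ dimHMeasure μ = ENNReal.ofReal d := by
  -- monotone families of good sets
  have hAfull : ∀ ε : ℝ, 0 < ε →
      μ (⋃ n : ℕ, {x | ∀ ρ : ℝ, 0 < ρ → ρ ≤ ((n:ℝ)+1)⁻¹ →
        ENNReal.ofReal (ρ ^ (d+ε)) ≤ μ (Metric.closedBall x ρ)}) = 1 := by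
    intro ε hε
    apply young_meas_eq_one μ
    filter_upwards [young_ae_lower μ d ε hε h] with x hx
    obtain ⟨n, hn⟩ := hx
    exact Set.mem_iUnion.2 ⟨n, hn⟩
  have hAmono : ∀ ε : ℝ, Monotone (fun n : ℕ => {x | ∀ ρ : ℝ, 0 < ρ → ρ ≤ ((n:ℝ)+1)⁻¹ →
      ENNReal.ofReal (ρ ^ (d+ε)) ≤ μ (Metric.closedBall x ρ)}) := by
    intro ε n m hnm x hx ρ hρ0 hρ
    refine hx ρ hρ0 (hρ.trans ?_)
    apply inv_anti₀ (by positivity)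
    have : (n:ℝ) ≤ (m:ℝ) := Nat.cast_le.2 hnm
    linarith
  constructor
  · -- lower box dimension bound
    rw [lowerBoxDimMeasure]
    refine iSup₂_le fun δ hδ => ?_
    refine ENNReal.le_of_forall_pos_le_add fun η hη _ => ?_
    have hη' : (0:ℝ) < (η:ℝ) := hη
    set A : ℕ → Set X := fun n => {x | ∀ ρ : ℝ, 0 < ρ → ρ ≤ ((n:ℝ)+1)⁻¹ →
      ENNReal.ofReal (ρ ^ (d+(η:ℝ))) ≤ μ (Metric.closedBall x ρ)} with hA
    have htend := tendsto_measure_iUnion_atTop (μ := μ) (hAmono (η:ℝ))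
    rw [hAfull (η:ℝ) hη'] at htend
    have hlt : (1:ℝ≥0∞) - ENNReal.ofReal δ < 1 :=
      ENNReal.sub_lt_self one_ne_top one_ne_zero (ENNReal.ofReal_pos.2 hδ).ne'
    obtain ⟨n, hn⟩ := (htend.eventually_const_lt hlt).exists
    have hmem : lowerBoxDim (A n) ∈
        {dd : ℝ≥0∞ | ∃ Z : Set X, 1 - ENNReal.ofReal δ ≤ μ Z ∧ dd = lowerBoxDim Z} :=
      ⟨A n, hn.le, rfl⟩
    calc sInf {dd : ℝ≥0∞ | ∃ Z : Set X, 1 - ENNReal.ofReal δ ≤ μ Z ∧ dd = lowerBoxDim Z}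
        ≤ lowerBoxDim (A n) := sInf_le hmem
      _ ≤ ENNReal.ofReal (d + (η:ℝ)) :=
          young_lowerBoxDim_le_of μ (by linarith) n (fun x hx => hx)
      _ = ENNReal.ofReal d + η := by
          rw [ENNReal.ofReal_add hd hη'.le, ENNReal.ofReal_coe_nnreal]
  · refine le_antisymm ?_ ?_
    · -- dimH μ ≤ d
      refine ENNReal.le_of_forall_pos_le_add fun η hη _ => ?_
      have hη' : (0:ℝ) < (η:ℝ) := hη
      set A : ℕ → Set X := fun n => {x | ∀ ρ : ℝ, 0 < ρ → ρ ≤ ((n:ℝ)+1)⁻¹ →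
        ENNReal.ofReal (ρ ^ (d+(η:ℝ))) ≤ μ (Metric.closedBall x ρ)} with hA
      calc dimHMeasure μ ≤ dimH (⋃ n, A n) := by
              rw [dimHMeasure]; exact iInf_le_of_le (⋃ n, A n) (iInf_le _ (hAfull (η:ℝ) hη'))
        _ = ⨆ n, dimH (A n) := dimH_iUnion A
        _ ≤ ENNReal.ofReal (d + (η:ℝ)) :=
            iSup_le fun n => young_dimH_le_of μ (by linarith) n (fun x hx => hx)
        _ = ENNReal.ofReal d + η := by
            rw [ENNReal.ofReal_add hd hη'.le, ENNReal.ofReal_coe_nnreal]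
    · -- d ≤ dimH μ
      refine le_iInf fun Z => le_iInf fun hZ => ?_
      rcases eq_or_lt_of_le hd with hd0 | hd0
      · rw [← hd0]; simp
      have claim : ∀ t : ℝ, 0 < t → t < d → ENNReal.ofReal t ≤ dimH Z := by
        intro t ht htd
        set B : ℕ → Set X := fun m => {x | ∀ q : ℚ, 0 < (q:ℝ) → (q:ℝ) ≤ ((m:ℝ)+1)⁻¹ →
          μ (Metric.closedBall x (q:ℝ)) ≤ ENNReal.ofReal ((q:ℝ)^t)} with hB
        have hBmeas : ∀ m, MeasurableSet (B m) := by
          intro m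
          have he : B m = ⋂ (q : ℚ), {x | 0 < (q:ℝ) → (q:ℝ) ≤ ((m:ℝ)+1)⁻¹ →
              μ (Metric.closedBall x (q:ℝ)) ≤ ENNReal.ofReal ((q:ℝ)^t)} := by
            ext x; simp [hB, Set.mem_iInter]
          rw [he]
          refine MeasurableSet.iInter fun q => ?_
          by_cases h1 : 0 < (q:ℝ) ∧ (q:ℝ) ≤ ((m:ℝ)+1)⁻¹
          · have he2 : {x | 0 < (q:ℝ) → (q:ℝ) ≤ ((m:ℝ)+1)⁻¹ →
                μ (Metric.closedBall x (q:ℝ)) ≤ ENNReal.ofReal ((q:ℝ)^t)}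
                = {x | μ (Metric.closedBall x (q:ℝ)) ≤ ENNReal.ofReal ((q:ℝ)^t)} := by
              ext x; simp [h1.1, h1.2]
            rw [he2]
            exact measurableSet_le (young_meas_cball μ (q:ℝ)) measurable_const
          · have he2 : {x | 0 < (q:ℝ) → (q:ℝ) ≤ ((m:ℝ)+1)⁻¹ →
                μ (Metric.closedBall x (q:ℝ)) ≤ ENNReal.ofReal ((q:ℝ)^t)} = Set.univ := by
              ext x
              simp only [Set.mem_univ, iff_true, Set.mem_setOf_eq]
              intro hq1 hq2
              exact absurd ⟨hq1, hq2⟩ h1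
            rw [he2]
            exact MeasurableSet.univ
        have hBmono : Monotone (fun m => Z ∩ B m) := by
          intro n m hnm
          apply Set.inter_subset_inter_right
          intro x hx q hq0 hq
          refine hx q hq0 (hq.trans ?_)
          apply inv_anti₀ (by positivity)
          have : (n:ℝ) ≤ (m:ℝ) := Nat.cast_le.2 hnm
          linarith
        have hWc : μ ((⋃ m, B m)ᶜ) = 0 := by
          have hae := young_ae_upper μ d t htd h
          have : ∀ᵐ x ∂μ, x ∈ ⋃ m, B m := by
            filter_upwards [hae] with x hx
            obtain ⟨m, hm⟩ := hx
            exact Set.mem_iUnion.2 ⟨m, hm⟩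
          rwa [ae_iff] at this
        have h1 : (1:ℝ≥0∞) ≤ μ (⋃ m, Z ∩ B m) := by
          rw [← Set.inter_iUnion]
          have hsub : Z ⊆ (Z ∩ ⋃ m, B m) ∪ (⋃ m, B m)ᶜ := by
            intro x hx
            by_cases hxW : x ∈ ⋃ m, B m
            · exact Or.inl ⟨hx, hxW⟩
            · exact Or.inr hxW
          calc (1:ℝ≥0∞) = μ Z := hZ.symm
            _ ≤ μ ((Z ∩ ⋃ m, B m) ∪ (⋃ m, B m)ᶜ) := measure_mono hsub
            _ ≤ μ (Z ∩ ⋃ m, B m) + μ ((⋃ m, B m)ᶜ) := measure_union_le _ _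
            _ = μ (Z ∩ ⋃ m, B m) := by rw [hWc, add_zero]
        have hpos : (0:ℝ≥0∞) < μ (⋃ m, Z ∩ B m) := lt_of_lt_of_le zero_lt_one h1
        have htend := tendsto_measure_iUnion_atTop (μ := μ) hBmono
        obtain ⟨m, hm⟩ := (htend.eventually_const_lt hpos).exists
        exact young_le_dimH_of μ (hBmeas m) ht m (fun x hx => hx) Z hm
      -- pass to the limit t → d
      have hseq : ∀ k : ℕ, ENNReal.ofReal (d - d / ((k:ℝ)+2)) ≤ dimH Z := by
        intro k
        have hk2 : (2:ℝ) ≤ (k:ℝ) + 2 := by linarith [show (0:ℝ) ≤ (k:ℝ) from Nat.cast_nonneg k]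
        have hlt1 : d / ((k:ℝ)+2) ≤ d / 2 := by gcongr
        have hlt2 : d / 2 < d := by linarith
        have hpos2 : 0 < d / ((k:ℝ)+2) := by positivity
        exact claim _ (by linarith) (by linarith)
      have htends : Tendsto (fun k : ℕ => ENNReal.ofReal (d - d / ((k:ℝ)+2))) atTop
          (𝓝 (ENNReal.ofReal d)) := by
        have h1 : Tendsto (fun k : ℕ => (k:ℝ)+2) atTop atTop :=
          tendsto_atTop_add_const_right atTop 2 tendsto_natCast_atTop_atTop
        have h2 : Tendsto (fun k : ℕ => d / ((k:ℝ)+2)) atTop (𝓝 0) :=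
          Tendsto.div_atTop tendsto_const_nhds h1
        have h3 : Tendsto (fun k : ℕ => d - d / ((k:ℝ)+2)) atTop (𝓝 d) := by
          simpa using tendsto_const_nhds.sub h2
        exact (ENNReal.continuous_ofReal.tendsto d).comp h3
      exact le_of_tendsto htends (Filter.Eventually.of_forall hseq)
end
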